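/- ∫_{-∞}^{∞} z³·2φ(z)Φ(λz) dz = bδ(3+2λ²)/(1+λ²), where b = √(2/π) and δ = λ/√(1+λ²); i.e., the third moment of the Azzalini skew normal SN(λ). -/

import Mathlib

open Real MeasureTheory Filter

/-- standard normal pdf -/
noncomputable def phi (z : ℝ) : ℝ := (Real.sqrt (2 * Real.pi))⁻¹ * Real.exp (-z ^ 2 / 2)

/-- standard normal cdf -/
noncomputable def Phi (z : ℝ) : ℝ := ∫ t in Set.Iic z, phi t

noncomputable def bconst : ℝ := Real.sqrt (2 / Real.pi)

noncomputable def del (l : ℝ) : ℝ := l / Real.sqrt (1 + l ^ 2)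

/-- GABSN normalizing constant -/
noncomputable def C (a β l : ℝ) : ℝ :=
  1 + 3 * a * β - a * bconst * del l - β * bconst * del l * (3 + 2 * l ^ 2) / (1 + l ^ 2)
    + a ^ 2 / 2 + 15 * β ^ 2 / 2

/-- GABSN density -/
noncomputable def f (a β l z : ℝ) : ℝ :=
  (((1 - a * z - β * z ^ 3) ^ 2 + 1) * phi z * Phi (l * z)) / C a β l

/- ### auxiliary lemmas -/

lemma phi_eq' : phi = fun z => (Real.sqrt (2 * Real.pi))⁻¹ * Real.exp (-(1/2) * z ^ 2) := by
  funext z; unfold phi; ring_nf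

lemma sqrt2pi_pos : 0 < Real.sqrt (2 * Real.pi) := Real.sqrt_pos.2 (by positivity)
lemma phi_nonneg (z : ℝ) : 0 ≤ phi z := by unfold phi; positivity
lemma phi_le (z : ℝ) : phi z ≤ (Real.sqrt (2 * Real.pi))⁻¹ := by
  unfold phi
  exact mul_le_of_le_one_right (inv_nonneg.2 sqrt2pi_pos.le)
    (Real.exp_le_one_iff.2 (by nlinarith [sq_nonneg z]))
lemma continuous_phi : Continuous phi := by unfold phi; fun_prop

lemma integrable_pow_gauss (n : ℕ) {c : ℝ} (hc : 0 < c) :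
    Integrable (fun z : ℝ => z ^ n * Real.exp (-c * z ^ 2)) := by
  have := integrable_rpow_mul_exp_neg_mul_sq hc (s := n)
    (lt_of_lt_of_le (by norm_num) (Nat.cast_nonneg n))
  simp_rw [Real.rpow_natCast] at this
  exact this

lemma integrable_phi : Integrable phi := by
  rw [phi_eq']
  exact (integrable_exp_neg_mul_sq (by norm_num : (0:ℝ) < 1/2)).const_mul _

lemma integral_phi : ∫ z : ℝ, phi z = 1 := by
  rw [phi_eq']
  simp_rw [integral_const_mul, integral_gaussian]
  rw [show Real.pi / (1/2) = 2 * Real.pi by ring]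
  field_simp

lemma Phi_zero : Phi 0 = 1/2 := by
  have heven : ∀ z : ℝ, phi (-z) = phi z := fun z => by unfold phi; ring_nf
  have h1 : Phi 0 = ∫ z in Set.Ioi (0:ℝ), phi z := by
    unfold Phi
    rw [show (0:ℝ) = -0 by norm_num, ← integral_comp_neg_Iic]
    simp [heven]
  have h2 : Phi 0 + ∫ z in Set.Ioi (0:ℝ), phi z = 1 := by
    unfold Phi
    rw [← integral_phi, ← setIntegral_union (by simp [Set.disjoint_left]) measurableSet_Ioi
      integrable_phi.integrableOn integrable_phi.integrableOn]
    simp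
  rw [h1] at h2 ⊢
  linarith

lemma Phi_nonneg (x : ℝ) : 0 ≤ Phi x := integral_nonneg fun z => phi_nonneg z
lemma Phi_le_one (x : ℝ) : Phi x ≤ 1 := by
  rw [← integral_phi]
  exact setIntegral_le_integral integrable_phi (Eventually.of_forall phi_nonneg)
lemma Phi_measurable : Measurable Phi := by
  have : Monotone Phi := fun a b hab =>
    setIntegral_mono_set integrable_phi.integrableOn
      (Eventually.of_forall phi_nonneg) (HasSubset.Subset.eventuallyLE (Set.Iic_subset_Iic.2 hab))
  exact this.measurable

lemma Phi_sub (x : ℝ) : Phi x - Phi 0 = ∫ u in (0:ℝ)..x, phi u :=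
  intervalIntegral.integral_Iic_sub_Iic integrable_phi.integrableOn integrable_phi.integrableOn

lemma hasDerivAt_pow_gauss (n : ℕ) (c z : ℝ) :
    HasDerivAt (fun z : ℝ => z ^ (n+1) * Real.exp (-c * z ^ 2))
      ((n+1) * (z ^ n * Real.exp (-c * z ^ 2)) - 2*c*(z^(n+2) * Real.exp (-c * z ^ 2))) z := by
  have h1 : HasDerivAt (fun z : ℝ => -c * z ^ 2) (-c * (2 * z)) z :=
    ((hasDerivAt_pow 2 z).const_mul (-c)).congr_deriv (by ring)
  have h2 := (hasDerivAt_pow (n+1) z).mul h1.exp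
  refine h2.congr_deriv ?_
  push_cast
  ring

lemma parts (n : ℕ) {c : ℝ} (hc : 0 < c) :
    (n+1 : ℝ) * ∫ z : ℝ, z ^ n * Real.exp (-c * z ^ 2)
      = 2*c* ∫ z : ℝ, z^(n+2) * Real.exp (-c * z ^ 2) := by
  have h0 := integral_eq_zero_of_hasDerivAt_of_integrable
    (fun z => hasDerivAt_pow_gauss n c z)
    (by
      have h1 := (integrable_pow_gauss n hc).const_mul ((n:ℝ)+1)
      have h2 := (integrable_pow_gauss (n+2) hc).const_mul (2*c)
      have := h1.sub h2
      simpa [Pi.sub_def] using this)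
    (integrable_pow_gauss (n+1) hc)
  rw [integral_sub ((integrable_pow_gauss n hc).const_mul _)
    ((integrable_pow_gauss (n+2) hc).const_mul _),
    MeasureTheory.integral_const_mul, MeasureTheory.integral_const_mul] at h0
  linarith [h0]

lemma integral_gauss2 {c : ℝ} (hc : 0 < c) :
    ∫ z : ℝ, z ^ 2 * Real.exp (-c * z ^ 2) = Real.sqrt (Real.pi / c) / (2 * c) := by
  have h := parts 0 hc
  simp only [pow_zero, one_mul, Nat.cast_zero, zero_add] at h
  rw [integral_gaussian] at h
  field_simp at h ⊢
  linarith

lemma integral_gauss4 {c : ℝ} (hc : 0 < c) :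
    ∫ z : ℝ, z ^ 4 * Real.exp (-c * z ^ 2) = 3 * Real.sqrt (Real.pi / c) / (4 * c ^ 2) := by
  have h := parts 2 hc
  rw [integral_gauss2 hc] at h
  norm_num at h
  rw [show (4:ℕ) = 2 + 2 by norm_num]
  field_simp at h ⊢
  linarith

lemma hasDerivAt_FF (b t : ℝ) :
    HasDerivAt (fun t : ℝ => b * (t*(3+2*t^2)) / ((1+t^2) * Real.sqrt (1+t^2)))
      (3 * b / ((1+t^2)^2 * Real.sqrt (1+t^2))) t := by
  have h1 : (0:ℝ) < 1 + t^2 := by positivity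
  have hs : 0 < Real.sqrt (1+t^2) := Real.sqrt_pos.2 h1
  have hsq : Real.sqrt (1+t^2) ^ 2 = 1 + t^2 := Real.sq_sqrt h1.le
  have hinner : HasDerivAt (fun t : ℝ => 1 + t^2) (2*t) t := by
    simpa using (hasDerivAt_pow 2 t).const_add 1
  have hsqrt : HasDerivAt (fun t : ℝ => Real.sqrt (1+t^2)) (2*t / (2 * Real.sqrt (1+t^2))) t :=
    (Real.hasDerivAt_sqrt h1.ne').comp t hinner |>.congr_deriv (by ring)
  have hden : HasDerivAt (fun t : ℝ => (1+t^2) * Real.sqrt (1+t^2))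
      (2*t * Real.sqrt (1+t^2) + (1+t^2) * (2*t / (2 * Real.sqrt (1+t^2)))) t :=
    hinner.mul hsqrt
  have hnum : HasDerivAt (fun t : ℝ => b * (t*(3+2*t^2))) (b * (3 + 6*t^2)) t := by
    have h2 : HasDerivAt (fun t : ℝ => 3 + 2*t^2) (2*(2*t)) t := by
      simpa using ((hasDerivAt_pow 2 t).const_mul 2).const_add 3
    have h3 := ((hasDerivAt_id t).mul h2).const_mul b
    simp only [id] at h3
    refine h3.congr_deriv ?_
    ring
  have hdiv := hnum.div hden (by positivity)
  have key : (1+t^2) * (2*t / (2 * Real.sqrt (1+t^2))) = t * Real.sqrt (1+t^2) := by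
    field_simp
    linear_combination (-t)*hsq
  rw [key] at hdiv
  refine hdiv.congr_deriv ?_
  rw [div_eq_div_iff (by positivity) (by positivity)]
  ring

lemma integral_G (b l : ℝ) :
    ∫ t in (0:ℝ)..l, 3*b/((1+t^2)^2*Real.sqrt (1+t^2))
      = b * (l*(3+2*l^2)) / ((1+l^2) * Real.sqrt (1+l^2)) := by
  have hcont : Continuous (fun t : ℝ => 3*b/((1+t^2)^2*Real.sqrt (1+t^2))) := by
    apply Continuous.div continuous_const
    · fun_prop
    · intro t; positivity
  rw [intervalIntegral.integral_eq_sub_of_hasDerivAt (fun t _ => hasDerivAt_FF b t)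
    (hcont.intervalIntegrable 0 l)]
  norm_num

lemma pointwise (l z : ℝ) :
    z^3*(2*phi z*Phi (l*z)) - z^3*phi z
      = ∫ t in (0:ℝ)..l, 2*z^4*(phi z * phi (t*z)) := by
  have h1 : ∫ t in (0:ℝ)..l, z * phi (t*z) = Phi (l*z) - 1/2 := by
    rcases eq_or_ne z 0 with hz | hz
    · simp [hz, Phi_zero]
    · rw [intervalIntegral.integral_const_mul, intervalIntegral.integral_comp_mul_right _ hz]
      rw [zero_mul, smul_eq_mul, ← mul_assoc, mul_inv_cancel₀ hz, one_mul, ← Phi_sub (l*z),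
        Phi_zero]
  have h2 : ∫ t in (0:ℝ)..l, 2*z^4*(phi z * phi (t*z))
      = (2*z^3*phi z) * ∫ t in (0:ℝ)..l, z * phi (t*z) := by
    rw [← intervalIntegral.integral_const_mul]
    congr 1
    funext t
    ring
  rw [h2, h1]
  ring

lemma integrable_F_prod (a b : ℝ) :
    Integrable (Function.uncurry fun z t : ℝ => 2*z^4*(phi z * phi (t*z)))
      (volume.prod (volume.restrict (Set.Ioc a b))) := by
  set K := (Real.sqrt (2*Real.pi))⁻¹ with hK
  have hf : Integrable (fun z : ℝ => 2*K^2*(z^4*Real.exp (-(1/2)*z^2))) :=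
    (integrable_pow_gauss 4 (by norm_num)).const_mul _
  have hg : Integrable (fun _ : ℝ => (1:ℝ)) (volume.restrict (Set.Ioc a b)) := by
    rw [integrable_const_iff]
    right
    exact isFiniteMeasure_restrict.2 measure_Ioc_lt_top.ne
  apply Integrable.mono' (hf.mul_prod hg)
  · apply Continuous.aestronglyMeasurable
    exact (continuous_const.mul (continuous_fst.pow 4)).mul
      ((continuous_phi.comp continuous_fst).mul
        (continuous_phi.comp (continuous_snd.mul continuous_fst)))
  · filter_upwards with p
    rcases p with ⟨z, t⟩
    simp only [Function.uncurry]
    have h0 : (0:ℝ) ≤ 2*z^4*(phi z * phi (t*z)) := by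
      have := phi_nonneg z; have := phi_nonneg (t*z); positivity
    rw [Real.norm_eq_abs, abs_of_nonneg h0]
    have hle := phi_le (t*z)
    have hz : phi z = K * Real.exp (-(1/2)*z^2) := by rw [phi_eq']
    have he : (0:ℝ) ≤ z^4 * Real.exp (-(1/2)*z^2) := by positivity
    have hKpos : (0:ℝ) ≤ K := by rw [hK]; positivity
    have hphiz := phi_nonneg (t*z)
    rw [hz]
    nlinarith [mul_le_mul_of_nonneg_left hle (mul_nonneg (mul_nonneg hKpos he) (by norm_num : (0:ℝ) ≤ 2))]
  
lemma bconst_eq : bconst = Real.sqrt (2*Real.pi) / Real.pi := by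
  unfold bconst
  rw [show (2:ℝ)/Real.pi = (2*Real.pi)/Real.pi^2 by field_simp]
  rw [Real.sqrt_div (by positivity), Real.sqrt_sq Real.pi_pos.le]

lemma sqrt_algebra : ∀ S s u : ℝ, 0 < S → 0 < s → 0 < u → S^2 = 2*Real.pi → s^2 = u →
    2*(S⁻¹)^2 * (3*(S/s)/(4*(u/2)^2)) = 3*(S/Real.pi)/(u^2*s) := by
  intro S s u hS hs hu h2 hsu
  have hpi := Real.pi_pos
  field_simp
  linear_combination (-4) * h2

lemma inner_eq (t : ℝ) :
    ∫ z : ℝ, 2*z^4*(phi z * phi (t*z)) = 3*bconst/((1+t^2)^2*Real.sqrt (1+t^2)) := by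
  set K := (Real.sqrt (2*Real.pi))⁻¹ with hK
  have hc : (0:ℝ) < (1+t^2)/2 := by positivity
  have hrw : ∀ z : ℝ, 2*z^4*(phi z * phi (t*z))
      = (2*K^2) * (z^4 * Real.exp (-((1+t^2)/2) * z^2)) := by
    intro z
    have hexp : Real.exp (-(1/2)*z^2) * Real.exp (-(1/2)*(t*z)^2)
        = Real.exp (-((1+t^2)/2)*z^2) := by
      rw [← Real.exp_add]; congr 1; ring
    rw [phi_eq']
    simp only
    rw [← hexp, ← hK]
    ring
  simp_rw [hrw]
  rw [MeasureTheory.integral_const_mul, integral_gauss4 hc]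
  have hπc : Real.pi/((1+t^2)/2) = (2*Real.pi)/(1+t^2) := by
    rw [div_div_eq_mul_div]; ring
  rw [hπc, Real.sqrt_div (by positivity), bconst_eq, hK]
  exact sqrt_algebra _ _ _ sqrt2pi_pos (Real.sqrt_pos.2 (by positivity)) (by positivity)
    (Real.sq_sqrt (by positivity)) (Real.sq_sqrt (by positivity))

lemma integrable_h2 : Integrable (fun z : ℝ => z ^ 3 * phi z) := by
  have h := (integrable_pow_gauss 3 (show (0:ℝ) < 1/2 by norm_num)).const_mul
    ((Real.sqrt (2*Real.pi))⁻¹)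
  rw [phi_eq']
  exact h.congr (Filter.Eventually.of_forall fun z => by ring)

lemma odd_vanish : ∫ z : ℝ, z ^ 3 * phi z = 0 := by
  have heven : ∀ z : ℝ, phi (-z) = phi z := fun z => by unfold phi; ring_nf
  have h := integral_neg_eq_self (fun z : ℝ => z ^ 3 * phi z) (volume : Measure ℝ)
  rw [show (fun z : ℝ => (-z) ^ 3 * phi (-z)) = fun z : ℝ => -(z ^ 3 * phi z) from
    funext fun z => by rw [heven]; ring, integral_neg] at h
  linarith

lemma integrable_h1 (l : ℝ) :
    Integrable (fun z : ℝ => z ^ 3 * (2 * phi z * Phi (l * z))) := by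
  set K := (Real.sqrt (2*Real.pi))⁻¹ with hK
  have hg : Integrable (fun z : ℝ =>
      2*K*(Real.exp (-(1/2)*z^2) + z^4*Real.exp (-(1/2)*z^2))) :=
    ((integrable_exp_neg_mul_sq (show (0:ℝ) < 1/2 by norm_num)).add
      (integrable_pow_gauss 4 (show (0:ℝ) < 1/2 by norm_num))).const_mul _
  apply Integrable.mono' hg
  · apply Measurable.aestronglyMeasurable
    exact ((measurable_id.pow_const 3).mul
      ((continuous_phi.measurable.const_mul 2).mul
        (Phi_measurable.comp (measurable_id.const_mul l))))
  · filter_upwards with z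
    have e1 : |z| ^ 3 ≤ 1 + z ^ 4 := by
      nlinarith [sq_nonneg (z^2 - |z|), sq_nonneg (|z| - 1), abs_nonneg z, sq_abs z]
    have hφ := phi_nonneg z
    have hΦ0 := Phi_nonneg (l*z)
    have hΦ1 := Phi_le_one (l*z)
    have hz : phi z = K * Real.exp (-(1/2)*z^2) := by rw [phi_eq']
    have hKpos : (0:ℝ) ≤ K := by rw [hK]; positivity
    have hE : (0:ℝ) < Real.exp (-(1/2)*z^2) := Real.exp_pos _
    calc ‖z ^ 3 * (2 * phi z * Phi (l * z))‖
        = |z| ^ 3 * (2 * phi z * Phi (l * z)) := by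
          rw [Real.norm_eq_abs, abs_mul, abs_pow,
            abs_of_nonneg (mul_nonneg (mul_nonneg (by norm_num : (0:ℝ) ≤ 2) hφ) hΦ0)]
      _ ≤ (1 + z ^ 4) * (2 * phi z * 1) := by
          apply mul_le_mul e1 _ (by positivity) (by positivity)
          exact mul_le_mul_of_nonneg_left hΦ1 (by positivity)
      _ = 2*K*(Real.exp (-(1/2)*z^2) + z^4*Real.exp (-(1/2)*z^2)) := by
          rw [hz]; ring

theorem stmt_8 (l : ℝ) :
    ∫ z : ℝ, z ^ 3 * (2 * phi z * Phi (l * z))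
      = bconst * del l * (3 + 2 * l ^ 2) / (1 + l ^ 2) := by
  have key : (∫ z : ℝ, z ^ 3 * (2 * phi z * Phi (l * z))) - ∫ z : ℝ, z ^ 3 * phi z
      = ∫ z : ℝ, ∫ t in (0:ℝ)..l, 2*z^4*(phi z * phi (t*z)) := by
    rw [← integral_sub (integrable_h1 l) integrable_h2]
    exact integral_congr_ae (Filter.Eventually.of_forall fun z => pointwise l z)
  have hswap : (∫ z : ℝ, ∫ t in (0:ℝ)..l, 2*z^4*(phi z * phi (t*z)))
      = ∫ t in (0:ℝ)..l, 3*bconst/((1+t^2)^2*Real.sqrt (1+t^2)) := by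
    rcases le_or_gt 0 l with hl | hl
    · simp_rw [intervalIntegral.integral_of_le hl]
      rw [integral_integral_swap (integrable_F_prod 0 l)]
      exact setIntegral_congr_fun measurableSet_Ioc fun t _ => inner_eq t
    · simp_rw [intervalIntegral.integral_of_ge hl.le]
      rw [integral_neg, integral_integral_swap (integrable_F_prod l 0)]
      rw [setIntegral_congr_fun measurableSet_Ioc fun t _ => inner_eq t]
  have hfin : ∫ z : ℝ, z ^ 3 * (2 * phi z * Phi (l * z))
      = bconst * (l*(3+2*l^2)) / ((1+l^2) * Real.sqrt (1+l^2)) := by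
    have h := key
    rw [odd_vanish, sub_zero] at h
    rw [h, hswap, integral_G]
  rw [hfin]
  unfold del
  have h1' : (0:ℝ) < 1 + l^2 := by positivity
  have hs : (0:ℝ) < Real.sqrt (1+l^2) := Real.sqrt_pos.2 h1'
  have hsq : Real.sqrt (1+l^2)^2 = 1+l^2 := Real.sq_sqrt h1'.le
  field_simp
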